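/- Let n be a prime and let V1, V2 be 2-dimensional symplectic vector spaces over Z/nZ. The number of Lagrangian subspaces of V1 x V2 of product form C1 x C2 is (n+1)^2 = n^2 + 2n + 1, the number that are graphs of anti-isometries V1 -> V2 is n^3 - n, and their sum equals (n^4-1)/(n-1), the total number of Lagrangian subspaces. -/

import Mathlib

open Module
set_option linter.unusedSectionVars false

section Basic
variable {F V : Type} [Field F] [Fintype F] [AddCommGroup V] [Module F V]

theorem my_skew (e : V →ₗ[F] V →ₗ[F] F) (halt : ∀ v, e v v = 0) (u v : V) :
    e u v = - e v u := by
  have h := halt (u + v)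
  simp only [map_add, LinearMap.add_apply, halt] at h
  linear_combination h

theorem my_fd (h : finrank F V = 2) : FiniteDimensional F V :=
  FiniteDimensional.of_finrank_pos (by omega)

theorem my_card [FiniteDimensional F V] (h : finrank F V = 2) :
    Nat.card V = Fintype.card F ^ 2 := by
  have : Finite V := Module.finite_of_finite F
  have : Fintype V := Fintype.ofFinite V
  rw [Nat.card_eq_fintype_card, card_eq_pow_finrank (K := F), h]

theorem my_card_ne [FiniteDimensional F V] (h : finrank F V = 2) :
    Nat.card {v : V // v ≠ 0} = Fintype.card F ^ 2 - 1 := by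
  have : Finite V := Module.finite_of_finite F
  have : Fintype V := Fintype.ofFinite V
  classical
  rw [Nat.card_eq_fintype_card, Fintype.card_subtype_compl, ← my_card (F := F) h,
    Nat.card_eq_fintype_card, Fintype.card_subtype_eq (0 : V)]
end Basic

section Lines
variable {F V : Type} [Field F] [Fintype F] [AddCommGroup V] [Module F V]
  [FiniteDimensional F V]

-- the fiber of span over a line C
theorem my_fiber_card (C : Submodule F V) (hC : finrank F C = 1) :
    Nat.card {v : {v : V // v ≠ 0} // Submodule.span F {v.val} = C} = Fintype.card F - 1 := by
  have : Finite V := Module.finite_of_finite F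
  have : Fintype V := Fintype.ofFinite V
  classical
  have e : {v : {v : V // v ≠ 0} // Submodule.span F {v.val} = C} ≃ {w : C // w ≠ 0} := by
    refine ⟨fun v => ⟨⟨v.val.val, ?_⟩, ?_⟩, fun w => ⟨⟨w.val.val, ?_⟩, ?_⟩, ?_, ?_⟩
    · have := Submodule.mem_span_singleton_self (R := F) v.val.val
      rwa [v.prop] at this
    · simp only [ne_eq, Submodule.mk_eq_zero]; exact v.val.prop
    · simpa using fun h => w.prop (Subtype.ext h)
    · -- span w = C
      have hle : Submodule.span F {w.val.val} ≤ C := by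
        rw [Submodule.span_singleton_le_iff_mem]; exact w.val.prop
      refine Submodule.eq_of_le_of_finrank_eq hle ?_
      rw [hC, finrank_span_singleton]
      simpa using fun h => w.prop (Subtype.ext h)
    · intro v; rfl
    · intro w; rfl
  rw [Nat.card_congr e]
  have : Fintype C := Fintype.ofFinite C
  rw [Nat.card_eq_fintype_card, Fintype.card_subtype_compl, Fintype.card_subtype_eq (0 : C)]
  congr 1
  rw [card_eq_pow_finrank (K := F) (V := C), hC, pow_one]

theorem my_card_lines (h : finrank F V = 2) :
    Nat.card {C : Submodule F V // finrank F C = 1} = Fintype.card F + 1 := by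
  have : Finite V := Module.finite_of_finite F
  have : Fintype V := Fintype.ofFinite V
  classical
  have hfin : Finite (Submodule F V) := Finite.of_injective _ SetLike.coe_injective
  have : Fintype (Submodule F V) := Fintype.ofFinite _
  set q := Fintype.card F with hq
  have hq2 : 2 ≤ q := Fintype.one_lt_card
  set L := {C : Submodule F V // finrank F C = 1} with hL
  have hne : ∀ v : {v : V // v ≠ 0}, finrank F (Submodule.span F {v.val}) = 1 :=
    fun v => finrank_span_singleton v.prop
  let f : {v : V // v ≠ 0} → L := fun v => ⟨Submodule.span F {v.val}, hne v⟩
  have e := Equiv.sigmaFiberEquiv f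
  have h1 : Nat.card {v : V // v ≠ 0} = ∑ C : L, Nat.card {v // f v = C} := by
    rw [← Nat.card_congr e, Nat.card_eq_fintype_card, Fintype.card_sigma]
    simp [Nat.card_eq_fintype_card]
  have h2 : ∀ C : L, Nat.card {v // f v = C} = q - 1 := by
    intro C
    have e2 : {v // f v = C} ≃ {v : {v : V // v ≠ 0} // Submodule.span F {v.val} = C.val} :=
      Equiv.subtypeEquivRight (fun v => by
        constructor
        · intro hv; exact congrArg Subtype.val hv
        · intro hv; exact Subtype.ext hv)
    rw [Nat.card_congr e2, my_fiber_card C.val C.prop]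
  rw [my_card_ne h] at h1
  simp only [h2, Finset.sum_const, Finset.card_univ, smul_eq_mul] at h1
  have h3 : Fintype.card L * (q - 1) = (q + 1) * (q - 1) := by
    rw [← h1]
    obtain ⟨m, hm⟩ : ∃ m, q = m + 2 := ⟨q - 2, by omega⟩
    rw [← hq, hm, show m + 2 - 1 = m + 1 from rfl]
    exact Nat.sub_eq_of_eq_add (by ring)
  have := Nat.eq_of_mul_eq_mul_right (by omega : 0 < q - 1) h3
  rw [Nat.card_eq_fintype_card]
  exact this
end Lines

section Symp
variable {F V : Type} [Field F] [Fintype F] [AddCommGroup V] [Module F V]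

theorem my_symp_basis (hd : finrank F V = 2) (e : V →ₗ[F] V →ₗ[F] F)
    (halt : ∀ v, e v v = 0) (hnd : ∀ v, (∀ w, e v w = 0) → v = 0) :
    ∃ b : Basis (Fin 2) F V, e (b 0) (b 1) = 1 := by
  have : FiniteDimensional F V := my_fd hd
  have : Nontrivial V := nontrivial_of_finrank_pos (R := F) (by omega)
  obtain ⟨x, hx⟩ := exists_ne (0 : V)
  have hw : ∃ w, e x w ≠ 0 := by
    by_contra hc
    push_neg at hc
    exact hx (hnd x hc)
  obtain ⟨w, hw⟩ := hw
  set y := (e x w)⁻¹ • w with hy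
  have hxy : e x y = 1 := by
    rw [hy, map_smul, smul_eq_mul, inv_mul_cancel₀ hw]
  have hyne : y ≠ 0 := by
    intro h; rw [h] at hxy; simp at hxy
  have hli : LinearIndependent F ![x, y] := by
    rw [LinearIndependent.pair_iff]
    intro s t hst
    have h1 : s = 0 := by
      have h2 := congrArg (fun z => e z y) hst
      simpa [hxy, halt] using h2
    subst h1
    rw [zero_smul, zero_add] at hst
    rcases smul_eq_zero.mp hst with h | h
    · exact ⟨rfl, h⟩
    · exact absurd h hyne
  refine ⟨basisOfLinearIndependentOfCardEqFinrank hli (by simp [hd]), ?_⟩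
  rw [coe_basisOfLinearIndependentOfCardEqFinrank]
  simpa using hxy

theorem my_fiber_card2 [FiniteDimensional F V] (hd : finrank F V = 2)
    (e : V →ₗ[F] V →ₗ[F] F) (hnd : ∀ v, (∀ w, e v w = 0) → v = 0)
    (a : V) (ha : a ≠ 0) (c : F) :
    Nat.card {b : V // e a b = c} = Fintype.card F := by
  have : Finite V := Module.finite_of_finite F
  have hne : e a ≠ 0 := by
    intro h
    exact ha (hnd a (fun w => by rw [h]; rfl))
  have hsurj : Function.Surjective (e a) := by
    rcases Ideal.eq_bot_or_top (LinearMap.range (e a)) with h | h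
    · exact absurd (LinearMap.range_eq_bot.mp h) hne
    · exact LinearMap.range_eq_top.mp h
  obtain ⟨b0, hb0⟩ := hsurj c
  have hker : finrank F (LinearMap.ker (e a)) = 1 := by
    have h1 := LinearMap.finrank_range_add_finrank_ker (e a)
    rw [hd, LinearMap.range_eq_top.mpr hsurj, finrank_top, finrank_self] at h1
    omega
  have eq1 : {b : V // e a b = c} ≃ LinearMap.ker (e a) := by
    refine ⟨fun b => ⟨b.val - b0, ?_⟩, fun k => ⟨k.val + b0, ?_⟩, ?_, ?_⟩
    · rw [LinearMap.mem_ker, map_sub, b.prop, hb0, sub_self]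
    · rw [map_add, hb0, LinearMap.mem_ker.mp k.prop, zero_add]
    · intro b; ext; simp
    · intro k; ext; simp
  rw [Nat.card_congr eq1]
  have : Fintype (LinearMap.ker (e a)) := Fintype.ofFinite _
  rw [Nat.card_eq_fintype_card, card_eq_pow_finrank (K := F), hker, pow_one]

theorem my_card_pairs [FiniteDimensional F V] (hd : finrank F V = 2)
    (e : V →ₗ[F] V →ₗ[F] F) (hnd : ∀ v, (∀ w, e v w = 0) → v = 0)
    (c : F) (hc : c ≠ 0) :
    Nat.card {p : V × V // e p.1 p.2 = c} = (Fintype.card F ^ 2 - 1) * Fintype.card F := by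
  have : Finite V := Module.finite_of_finite F
  classical
  have eqs : {p : V × V // e p.1 p.2 = c} ≃ Σ a : {a : V // a ≠ 0}, {b : V // e a.val b = c} := by
    refine ⟨fun p => ⟨⟨p.val.1, ?_⟩, ⟨p.val.2, p.prop⟩⟩, fun x => ⟨(x.1.val, x.2.val), x.2.prop⟩, ?_, ?_⟩
    · intro h
      apply hc
      rw [← p.prop, h]
      simp
    · intro p; rfl
    · intro x; rfl
  rw [Nat.card_congr eqs]
  have : Fintype {a : V // a ≠ 0} := Fintype.ofFinite _
  have : ∀ a : {a : V // a ≠ 0}, Fintype {b : V // e a.val b = c} := fun a => Fintype.ofFinite _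
  rw [Nat.card_eq_fintype_card, Fintype.card_sigma]
  have hfib : ∀ a : {a : V // a ≠ 0}, Fintype.card {b : V // e a.val b = c}
      = Fintype.card F := by
    intro a
    rw [← Nat.card_eq_fintype_card, my_fiber_card2 hd e hnd a.val a.prop c]
  simp only [hfib, Finset.sum_const, Finset.card_univ, smul_eq_mul]
  rw [← Nat.card_eq_fintype_card, my_card_ne hd]
end Symp

section Anti
variable {F V1 V2 : Type} [Field F] [Fintype F] [AddCommGroup V1] [Module F V1]
  [AddCommGroup V2] [Module F V2]

theorem my_card_anti (hd1 : finrank F V1 = 2) (hd2 : finrank F V2 = 2)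
    (e1 : V1 →ₗ[F] V1 →ₗ[F] F) (e2 : V2 →ₗ[F] V2 →ₗ[F] F)
    (halt1 : ∀ v, e1 v v = 0) (halt2 : ∀ v, e2 v v = 0)
    (hnd1 : ∀ v, (∀ w, e1 v w = 0) → v = 0)
    (hnd2 : ∀ v, (∀ w, e2 v w = 0) → v = 0) :
    Nat.card {ψ : V1 ≃ₗ[F] V2 // ∀ u v, e2 (ψ u) (ψ v) = - e1 u v}
      = (Fintype.card F ^ 2 - 1) * Fintype.card F := by
  have : FiniteDimensional F V1 := my_fd hd1
  have : FiniteDimensional F V2 := my_fd hd2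
  obtain ⟨b, hb⟩ := my_symp_basis hd1 e1 halt1 hnd1
  have hb00 : e1 (b 0) (b 0) = 0 := halt1 _
  have hb11 : e1 (b 1) (b 1) = 0 := halt1 _
  have hb10 : e1 (b 1) (b 0) = -1 := by rw [my_skew e1 halt1, hb]
  have hm1 : (-1 : F) ≠ 0 := neg_ne_zero.mpr one_ne_zero
  rw [← my_card_pairs (V := V2) hd2 e2 hnd2 (-1) hm1]
  apply Nat.card_eq_of_bijective
    (fun ψ => (⟨(ψ.val (b 0), ψ.val (b 1)), by rw [ψ.prop, hb]⟩ :
      {p : V2 × V2 // e2 p.1 p.2 = -1}))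
  constructor
  · intro ψ ψ' hψ
    have h0 : ψ.val (b 0) = ψ'.val (b 0) := congrArg (fun p => p.val.1) hψ
    have h1 : ψ.val (b 1) = ψ'.val (b 1) := congrArg (fun p => p.val.2) hψ
    refine Subtype.ext (LinearEquiv.toLinearMap_injective (b.ext fun i => ?_))
    fin_cases i <;> assumption
  · rintro ⟨⟨a, c⟩, hac⟩
    have hca : e2 c a = 1 := by rw [my_skew e2 halt2, hac, neg_neg]
    have haa : e2 a a = 0 := halt2 _
    have hcc : e2 c c = 0 := halt2 _
    set f := b.constr F ![a, c] with hf
    have hfa : f (b 0) = a := by rw [hf, Basis.constr_basis]; rfl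
    have hfc : f (b 1) = c := by rw [hf, Basis.constr_basis]; rfl
    have hexp : ∀ u : V1, u = b.repr u 0 • b 0 + b.repr u 1 • b 1 := by
      intro u
      have := b.sum_repr u
      rw [Fin.sum_univ_two] at this
      exact this.symm
    have hker : LinearMap.ker f = ⊥ := by
      rw [Submodule.eq_bot_iff]
      intro v hv
      rw [LinearMap.mem_ker] at hv
      have hv' : f v = b.repr v 0 • a + b.repr v 1 • c := by
        conv_lhs => rw [hexp v]
        rw [map_add, map_smul, map_smul, hfa, hfc]
      rw [hv'] at hv
      have h1 : b.repr v 0 = 0 := by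
        have := congrArg (fun z => e2 z c) hv
        simpa [hac, hcc] using this
      have h2 : b.repr v 1 = 0 := by
        have := congrArg (fun z => e2 a z) hv
        simpa [haa, hac] using this
      rw [hexp v, h1, h2, zero_smul, zero_smul, add_zero]
    have hinj : Function.Injective f := LinearMap.ker_eq_bot.mp hker
    set ψ := LinearMap.linearEquivOfInjective f hinj (hd1.trans hd2.symm) with hψdef
    have hψ : ∀ u, ψ u = f u := fun u => LinearMap.linearEquivOfInjective_apply hinj _ u
    have hanti : ∀ u v, e2 (ψ u) (ψ v) = - e1 u v := by
      intro u v
      rw [hψ u, hψ v]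
      conv_lhs => rw [hexp u, hexp v]
      conv_rhs => rw [hexp u, hexp v]
      simp only [map_add, map_smul, LinearMap.add_apply, LinearMap.smul_apply, smul_eq_mul,
        hfa, hfc, hb, hb00, hb11, hb10, haa, hcc, hac, hca]
      ring
    refine ⟨⟨ψ, hanti⟩, ?_⟩
    refine Subtype.ext (Prod.ext ?_ ?_)
    · simpa [hψ] using hfa
    · simpa [hψ] using hfc
end Anti

section Lag
variable {F V1 V2 : Type} [Field F] [Fintype F] [AddCommGroup V1] [Module F V1]
  [AddCommGroup V2] [Module F V2]
  (e1 : V1 →ₗ[F] V1 →ₗ[F] F) (e2 : V2 →ₗ[F] V2 →ₗ[F] F)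

/-- any two elements of a 1-dim (or less) subspace pair to zero under an alternating form -/
theorem my_line_iso {V : Type} [AddCommGroup V] [Module F V] [FiniteDimensional F V]
    (e : V →ₗ[F] V →ₗ[F] F) (halt : ∀ v, e v v = 0)
    (C : Submodule F V) (hC : finrank F C ≤ 1) {u v : V} (hu : u ∈ C) (hv : v ∈ C) :
    e u v = 0 := by
  rcases eq_or_ne u 0 with h | h
  · rw [h, map_zero]; rfl
  · have hle : Submodule.span F {u} ≤ C := by
      rw [Submodule.span_singleton_le_iff_mem]; exact hu
    have heq : Submodule.span F {u} = C :=
      Submodule.eq_of_le_of_finrank_le hle (by rw [finrank_span_singleton h]; exact hC)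
    rw [← heq] at hv
    obtain ⟨t, rfl⟩ := Submodule.mem_span_singleton.mp hv
    rw [map_smul, smul_eq_mul, halt, mul_zero]

/-- an isotropic subspace of a 2-dim nondegenerate space has finrank ≤ 1 -/
theorem my_iso_le_one {V : Type} [AddCommGroup V] [Module F V] [FiniteDimensional F V]
    (hd : finrank F V = 2) (e : V →ₗ[F] V →ₗ[F] F)
    (hnd : ∀ v, (∀ w, e v w = 0) → v = 0)
    (C : Submodule F V) (hiso : ∀ u ∈ C, ∀ v ∈ C, e u v = 0) :
    finrank F C ≤ 1 := by
  by_contra hc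
  push_neg at hc
  have hle := Submodule.finrank_le C
  rw [hd] at hle
  have h2 : finrank F C = 2 := by omega
  have htop : C = ⊤ := Submodule.eq_top_of_finrank_eq (by rw [h2, hd])
  have : Nontrivial V := nontrivial_of_finrank_pos (R := F) (by omega)
  obtain ⟨x, hx⟩ := exists_ne (0 : V)
  exact hx (hnd x (fun w => hiso x (htop ▸ Submodule.mem_top) w (htop ▸ Submodule.mem_top)))

/-- the product of two submodules is linearly equivalent to their direct product -/
noncomputable def myProdEquiv (p : Submodule F V1) (q : Submodule F V2) :
    (p.prod q) ≃ₗ[F] p × q where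
  toFun x := (⟨x.val.1, x.prop.1⟩, ⟨x.val.2, x.prop.2⟩)
  map_add' x y := rfl
  map_smul' c x := rfl
  invFun x := ⟨(x.1.val, x.2.val), ⟨x.1.prop, x.2.prop⟩⟩
  left_inv x := rfl
  right_inv x := rfl

theorem my_finrank_prod [FiniteDimensional F V1] [FiniteDimensional F V2]
    (p : Submodule F V1) (q : Submodule F V2) :
    finrank F (p.prod q) = finrank F p + finrank F q := by
  rw [LinearEquiv.finrank_eq (myProdEquiv p q), Module.finrank_prod]
end Lag

section Lag2
variable {F V1 V2 : Type} [Field F] [Fintype F] [AddCommGroup V1] [Module F V1]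
  [AddCommGroup V2] [Module F V2]
  (e1 : V1 →ₗ[F] V1 →ₗ[F] F) (e2 : V2 →ₗ[F] V2 →ₗ[F] F)

theorem my_prod_lines [FiniteDimensional F V1] [FiniteDimensional F V2]
    (hd1 : finrank F V1 = 2) (hd2 : finrank F V2 = 2)
    (hnd1 : ∀ v, (∀ w, e1 v w = 0) → v = 0)
    (hnd2 : ∀ v, (∀ w, e2 v w = 0) → v = 0)
    (C1 : Submodule F V1) (C2 : Submodule F V2)
    (h2 : finrank F (C1.prod C2) = 2)
    (hiso : ∀ u ∈ C1.prod C2, ∀ v ∈ C1.prod C2, e1 u.1 v.1 + e2 u.2 v.2 = 0) :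
    finrank F C1 = 1 ∧ finrank F C2 = 1 := by
  have hsum : finrank F C1 + finrank F C2 = 2 := by
    rw [← my_finrank_prod, h2]
  have hiso1 : ∀ u ∈ C1, ∀ v ∈ C1, e1 u v = 0 := by
    intro u hu v hv
    have := hiso (u, 0) ⟨hu, C2.zero_mem⟩ (v, 0) ⟨hv, C2.zero_mem⟩
    simpa using this
  have hiso2 : ∀ u ∈ C2, ∀ v ∈ C2, e2 u v = 0 := by
    intro u hu v hv
    have := hiso (0, u) ⟨C1.zero_mem, hu⟩ (0, v) ⟨C1.zero_mem, hv⟩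
    simpa using this
  have h1 := my_iso_le_one hd1 e1 hnd1 C1 hiso1
  have h2' := my_iso_le_one hd2 e2 hnd2 C2 hiso2
  omega

theorem my_card_prodLag [FiniteDimensional F V1] [FiniteDimensional F V2]
    (hd1 : finrank F V1 = 2) (hd2 : finrank F V2 = 2)
    (halt1 : ∀ v, e1 v v = 0) (halt2 : ∀ v, e2 v v = 0)
    (hnd1 : ∀ v, (∀ w, e1 v w = 0) → v = 0)
    (hnd2 : ∀ v, (∀ w, e2 v w = 0) → v = 0) :
    Nat.card {G : Submodule F (V1 × V2) //
        finrank F G = 2 ∧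
        (∀ u ∈ G, ∀ v ∈ G, e1 u.1 v.1 + e2 u.2 v.2 = 0) ∧
        ∃ (C1 : Submodule F V1) (C2 : Submodule F V2), G = C1.prod C2}
      = (Fintype.card F + 1) ^ 2 := by
  have key : Nat.card ({C : Submodule F V1 // finrank F C = 1} ×
      {C : Submodule F V2 // finrank F C = 1}) = (Fintype.card F + 1) ^ 2 := by
    rw [Nat.card_prod, my_card_lines hd1, my_card_lines hd2, sq]
  rw [← key]
  symm
  apply Nat.card_eq_of_bijective (fun P =>
    ⟨P.1.val.prod P.2.val, by
      refine ⟨by rw [my_finrank_prod, P.1.prop, P.2.prop], ?_, P.1.val, P.2.val, rfl⟩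
      intro u hu v hv
      rw [my_line_iso e1 halt1 P.1.val (le_of_eq P.1.prop) hu.1 hv.1,
        my_line_iso e2 halt2 P.2.val (le_of_eq P.2.prop) hu.2 hv.2, add_zero]⟩)
  constructor
  · intro P Q hPQ
    have hPQ' : P.1.val.prod P.2.val = Q.1.val.prod Q.2.val := congrArg Subtype.val hPQ
    have m1 : ∀ (D1 : Submodule F V1) (D2 : Submodule F V2) (x : V1),
        x ∈ D1 ↔ ((x, 0) : V1 × V2) ∈ D1.prod D2 :=
      fun D1 D2 x => ⟨fun h => ⟨h, D2.zero_mem⟩, fun h => h.1⟩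
    have m2 : ∀ (D1 : Submodule F V1) (D2 : Submodule F V2) (y : V2),
        y ∈ D2 ↔ ((0, y) : V1 × V2) ∈ D1.prod D2 :=
      fun D1 D2 y => ⟨fun h => ⟨D1.zero_mem, h⟩, fun h => h.2⟩
    refine Prod.ext (Subtype.ext ?_) (Subtype.ext ?_)
    · ext x; rw [m1 _ P.2.val, hPQ', ← m1]
    · ext y; rw [m2 P.1.val, hPQ', ← m2]
  · rintro ⟨G, h2, hiso, C1, C2, rfl⟩
    obtain ⟨hc1, hc2⟩ := my_prod_lines e1 e2 hd1 hd2 hnd1 hnd2 C1 C2 h2 hiso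
    exact ⟨(⟨C1, hc1⟩, ⟨C2, hc2⟩), rfl⟩

theorem my_card_graphLag [FiniteDimensional F V1] [FiniteDimensional F V2]
    (hd1 : finrank F V1 = 2) (hd2 : finrank F V2 = 2)
    (halt1 : ∀ v, e1 v v = 0) (halt2 : ∀ v, e2 v v = 0)
    (hnd1 : ∀ v, (∀ w, e1 v w = 0) → v = 0)
    (hnd2 : ∀ v, (∀ w, e2 v w = 0) → v = 0) :
    Nat.card {G : Submodule F (V1 × V2) //
        finrank F G = 2 ∧
        (∀ u ∈ G, ∀ v ∈ G, e1 u.1 v.1 + e2 u.2 v.2 = 0) ∧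
        ∃ ψ : V1 ≃ₗ[F] V2,
          (∀ u v, e2 (ψ u) (ψ v) = - e1 u v) ∧
          G = LinearMap.graph (ψ : V1 →ₗ[F] V2)}
      = (Fintype.card F ^ 2 - 1) * Fintype.card F := by
  rw [← my_card_anti hd1 hd2 e1 e2 halt1 halt2 hnd1 hnd2]
  symm
  have hgr : ∀ (ψ : V1 ≃ₗ[F] V2) (x : V1),
      ((x, ψ x) : V1 × V2) ∈ LinearMap.graph (ψ : V1 →ₗ[F] V2) :=
    fun ψ x => LinearMap.mem_graph_iff _ _ |>.mpr rfl
  have hfr : ∀ ψ : V1 ≃ₗ[F] V2, finrank F (LinearMap.graph (ψ : V1 →ₗ[F] V2)) = 2 := by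
    intro ψ
    rw [LinearMap.graph_eq_range_prod]
    have hinj : Function.Injective (LinearMap.id.prod (ψ : V1 →ₗ[F] V2)) :=
      fun x y h => congrArg Prod.fst h
    rw [← LinearEquiv.finrank_eq (LinearEquiv.ofInjective _ hinj)]
    exact hd1
  apply Nat.card_eq_of_bijective (fun ψ =>
    ⟨LinearMap.graph (ψ.val : V1 →ₗ[F] V2), by
      refine ⟨hfr ψ.val, ?_, ψ.val, ψ.prop, rfl⟩
      intro u hu v hv
      rw [LinearMap.mem_graph_iff] at hu hv
      rw [hu, hv]
      simp only [LinearEquiv.coe_coe]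
      rw [ψ.prop, add_neg_cancel]⟩)
  constructor
  · intro ψ ψ' h
    have h' : LinearMap.graph (ψ.val : V1 →ₗ[F] V2)
        = LinearMap.graph (ψ'.val : V1 →ₗ[F] V2) := congrArg Subtype.val h
    refine Subtype.ext (LinearEquiv.ext fun x => ?_)
    have := hgr ψ.val x
    rw [h'] at this
    have h2 := (LinearMap.mem_graph_iff _ _).mp this
    simpa using h2
  · rintro ⟨G, h2, hiso, ψ, hanti, rfl⟩
    exact ⟨⟨ψ, hanti⟩, rfl⟩
end Lag2

section Lag3
variable {F V1 V2 : Type} [Field F] [Fintype F] [AddCommGroup V1] [Module F V1]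
  [AddCommGroup V2] [Module F V2]
  (e1 : V1 →ₗ[F] V1 →ₗ[F] F) (e2 : V2 →ₗ[F] V2 →ₗ[F] F)

theorem my_lag_cases [FiniteDimensional F V1] [FiniteDimensional F V2]
    (hd1 : finrank F V1 = 2) (hd2 : finrank F V2 = 2)
    (halt1 : ∀ v, e1 v v = 0) (halt2 : ∀ v, e2 v v = 0)
    (hnd1 : ∀ v, (∀ w, e1 v w = 0) → v = 0)
    (hnd2 : ∀ v, (∀ w, e2 v w = 0) → v = 0)
    (G : Submodule F (V1 × V2)) (h2 : finrank F G = 2)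
    (hiso : ∀ u ∈ G, ∀ v ∈ G, e1 u.1 v.1 + e2 u.2 v.2 = 0) :
    (∃ (C1 : Submodule F V1) (C2 : Submodule F V2), G = C1.prod C2) ∨
    (∃ ψ : V1 ≃ₗ[F] V2, (∀ u v, e2 (ψ u) (ψ v) = - e1 u v) ∧
      G = LinearMap.graph (ψ : V1 →ₗ[F] V2)) := by
  by_cases hK : Submodule.comap (LinearMap.inr F V1 V2) G = ⊥
  · right
    set p1 := (LinearMap.fst F V1 V2) ∘ₗ G.subtype with hp1
    have hker1 : LinearMap.ker p1 = ⊥ := by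
      rw [Submodule.eq_bot_iff]
      intro g hg
      rw [LinearMap.mem_ker] at hg
      have hg1 : (g : V1 × V2).1 = 0 := hg
      have hmem : (g : V1 × V2).2 ∈ Submodule.comap (LinearMap.inr F V1 V2) G := by
        rw [Submodule.mem_comap]
        have : (LinearMap.inr F V1 V2) (g : V1 × V2).2 = (g : V1 × V2) := by
          ext
          · exact hg1.symm
          · rfl
        rw [this]
        exact g.prop
      rw [hK, Submodule.mem_bot] at hmem
      exact Subtype.ext (Prod.ext hg1 hmem)
    have hinj1 : Function.Injective p1 := LinearMap.ker_eq_bot.mp hker1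
    have hsurj1 : Function.Surjective p1 :=
      (LinearMap.injective_iff_surjective_of_finrank_eq_finrank
        (by rw [h2, hd1])).mp hinj1
    set p2 := (LinearMap.snd F V1 V2) ∘ₗ G.subtype with hp2
    have hker2 : LinearMap.ker p2 = ⊥ := by
      rw [Submodule.eq_bot_iff]
      intro g hg
      rw [LinearMap.mem_ker] at hg
      have hg2 : (g : V1 × V2).2 = 0 := hg
      have hg1 : (g : V1 × V2).1 = 0 := by
        apply hnd1
        intro w
        obtain ⟨h, hh⟩ := hsurj1 w
        have := hiso g.val g.prop h.val h.prop
        rw [hg2] at this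
        simp only [map_zero, LinearMap.zero_apply, add_zero] at this
        have hh1 : (h : V1 × V2).1 = w := hh
        rwa [hh1] at this
      exact Subtype.ext (Prod.ext hg1 hg2)
    have hinj2 : Function.Injective p2 := LinearMap.ker_eq_bot.mp hker2
    have hsurj2 : Function.Surjective p2 :=
      (LinearMap.injective_iff_surjective_of_finrank_eq_finrank
        (by rw [h2, hd2])).mp hinj2
    obtain ⟨ψ, hψ⟩ := Submodule.exists_equiv_eq_graph
      (⟨hinj1, hsurj1⟩ : Function.Bijective (Prod.fst ∘ G.subtype))
      (⟨hinj2, hsurj2⟩ : Function.Bijective (Prod.snd ∘ G.subtype))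
    refine ⟨ψ, ?_, hψ⟩
    intro u v
    have hu : ((u, ψ u) : V1 × V2) ∈ G := by
      rw [hψ]; exact (LinearMap.mem_graph_iff _ _).mpr rfl
    have hv : ((v, ψ v) : V1 × V2) ∈ G := by
      rw [hψ]; exact (LinearMap.mem_graph_iff _ _).mpr rfl
    have := hiso _ hu _ hv
    simp only at this
    linear_combination this
  · left
    obtain ⟨w, hwG, hw0⟩ := Submodule.ne_bot_iff _ |>.mp hK
    rw [Submodule.mem_comap] at hwG
    have hwG : ((0, w) : V1 × V2) ∈ G := hwG
    set φ : V2 →ₗ[F] F := e2.flip w with hφ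
    have hφw : ∀ v, φ v = e2 v w := fun v => rfl
    have hφne : φ ≠ 0 := by
      intro h
      apply hw0
      apply hnd2
      intro v
      rw [my_skew e2 halt2]
      have : φ v = 0 := by rw [h]; rfl
      rw [hφw] at this
      rw [this, neg_zero]
    have hranφ : LinearMap.range φ = ⊤ := by
      rcases Ideal.eq_bot_or_top (LinearMap.range φ) with h | h
      · exact absurd (LinearMap.range_eq_bot.mp h) hφne
      · exact h
    have hkerφ : finrank F (LinearMap.ker φ) = 1 := by
      have h1 := LinearMap.finrank_range_add_finrank_ker φ
      rw [hd2, hranφ, finrank_top, finrank_self] at h1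
      omega
    have hspan : Submodule.span F {w} = LinearMap.ker φ := by
      apply Submodule.eq_of_le_of_finrank_eq
      · rw [Submodule.span_singleton_le_iff_mem, LinearMap.mem_ker, hφw, halt2]
      · rw [finrank_span_singleton hw0, hkerφ]
    set C1 := Submodule.map (LinearMap.fst F V1 V2) G with hC1
    have hle : G ≤ C1.prod (Submodule.span F {w}) := by
      intro g hg
      refine ⟨Submodule.mem_map.mpr ⟨g, hg, rfl⟩, ?_⟩
      rw [hspan]
      show φ g.2 = 0
      rw [hφw]
      have := hiso g hg (0, w) hwG
      simpa using this
    have hC1le : finrank F C1 ≤ 1 := by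
      set p1 := (LinearMap.fst F V1 V2) ∘ₗ G.subtype with hp1
      have hran : LinearMap.range p1 = C1 := by
        rw [hp1, LinearMap.range_comp, Submodule.range_subtype]
      have hkerne : LinearMap.ker p1 ≠ ⊥ := by
        intro h
        have hmem : (⟨(0, w), hwG⟩ : G) ∈ LinearMap.ker p1 := by
          rw [LinearMap.mem_ker]; rfl
        rw [h, Submodule.mem_bot] at hmem
        apply hw0
        have := congrArg (fun x => (Subtype.val x).2) hmem
        simpa using this
      have hkerpos : 0 < finrank F (LinearMap.ker p1) := by
        refine (finrank_pos_iff (R := F) (M := LinearMap.ker p1)).mpr ?_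
        exact Submodule.nontrivial_iff_ne_bot.mpr hkerne
      have h1 := LinearMap.finrank_range_add_finrank_ker p1
      rw [h2, hran] at h1
      omega
    have hfr : finrank F (C1.prod (Submodule.span F {w})) ≤ 2 := by
      rw [my_finrank_prod, finrank_span_singleton hw0]
      omega
    refine ⟨C1, Submodule.span F {w}, Submodule.eq_of_le_of_finrank_le hle (by omega)⟩
end Lag3

section Lag4
variable {F V1 V2 : Type} [Field F] [Fintype F] [AddCommGroup V1] [Module F V1]
  [AddCommGroup V2] [Module F V2]
  (e1 : V1 →ₗ[F] V1 →ₗ[F] F) (e2 : V2 →ₗ[F] V2 →ₗ[F] F)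

theorem my_card_Lag [FiniteDimensional F V1] [FiniteDimensional F V2]
    (hd1 : finrank F V1 = 2) (hd2 : finrank F V2 = 2)
    (halt1 : ∀ v, e1 v v = 0) (halt2 : ∀ v, e2 v v = 0)
    (hnd1 : ∀ v, (∀ w, e1 v w = 0) → v = 0)
    (hnd2 : ∀ v, (∀ w, e2 v w = 0) → v = 0) :
    Nat.card {G : Submodule F (V1 × V2) //
        finrank F G = 2 ∧ (∀ u ∈ G, ∀ v ∈ G, e1 u.1 v.1 + e2 u.2 v.2 = 0)}
      = (Fintype.card F + 1) ^ 2 + (Fintype.card F ^ 2 - 1) * Fintype.card F := by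
  classical
  have : Finite V1 := Module.finite_of_finite F
  have : Finite V2 := Module.finite_of_finite F
  haveI hfin : Finite (Submodule F (V1 × V2)) := Finite.of_injective _ SetLike.coe_injective
  set P : Submodule F (V1 × V2) → Prop := fun G =>
    finrank F G = 2 ∧ (∀ u ∈ G, ∀ v ∈ G, e1 u.1 v.1 + e2 u.2 v.2 = 0) ∧
      ∃ (C1 : Submodule F V1) (C2 : Submodule F V2), G = C1.prod C2 with hP
  set Q : Submodule F (V1 × V2) → Prop := fun G =>
    finrank F G = 2 ∧ (∀ u ∈ G, ∀ v ∈ G, e1 u.1 v.1 + e2 u.2 v.2 = 0) ∧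
      ∃ ψ : V1 ≃ₗ[F] V2, (∀ u v, e2 (ψ u) (ψ v) = - e1 u v) ∧
        G = LinearMap.graph (ψ : V1 →ₗ[F] V2) with hQ
  have hdisj : Disjoint P Q := by
    refine Pi.disjoint_iff.mpr fun G => Prop.disjoint_iff.mpr ?_
    rintro ⟨⟨h2, hiso, C1, C2, hGp⟩, ⟨-, -, ψ, hanti, hGg⟩⟩
    rw [hGp] at h2 hiso
    obtain ⟨-, hc2⟩ := my_prod_lines e1 e2 hd1 hd2 hnd1 hnd2 C1 C2 h2 hiso
    have hC2ne : C2 ≠ ⊥ := by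
      intro h
      rw [h, finrank_bot] at hc2
      omega
    obtain ⟨y, hy, hy0⟩ := Submodule.ne_bot_iff _ |>.mp hC2ne
    have hmem : ((0, y) : V1 × V2) ∈ C1.prod C2 := ⟨C1.zero_mem, hy⟩
    rw [← hGp, hGg] at hmem
    have := (LinearMap.mem_graph_iff _ _).mp hmem
    simp only [map_zero] at this
    exact hy0 this
  have hiff : ∀ G : Submodule F (V1 × V2),
      (finrank F G = 2 ∧ (∀ u ∈ G, ∀ v ∈ G, e1 u.1 v.1 + e2 u.2 v.2 = 0)) ↔ (P G ∨ Q G) := by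
    intro G
    constructor
    · rintro ⟨h2, hiso⟩
      rcases my_lag_cases e1 e2 hd1 hd2 halt1 halt2 hnd1 hnd2 G h2 hiso with h | h
      · exact Or.inl ⟨h2, hiso, h⟩
      · exact Or.inr ⟨h2, hiso, h⟩
    · rintro (⟨h2, hiso, -⟩ | ⟨h2, hiso, -⟩) <;> exact ⟨h2, hiso⟩
  have e := (Equiv.subtypeEquivRight hiff).trans (subtypeOrEquiv P Q hdisj)
  rw [Nat.card_congr e, Nat.card_sum, hP, hQ,
    my_card_prodLag e1 e2 hd1 hd2 halt1 halt2 hnd1 hnd2,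
    my_card_graphLag e1 e2 hd1 hd2 halt1 halt2 hnd1 hnd2]
end Lag4


/-- counting Lagrangian subspaces of an orthogonal sum `V1 × V2` of
two 2-dimensional symplectic `ℤ/nℤ`-vector spaces: `(n+1)^2` of them are of
product form, `n^3 - n` are graphs of anti-isometries, and the total number is
`(n^4-1)/(n-1)`, which is the sum of the two. -/
theorem count_lagrangians_product_and_graphs
    (n : ℕ) (hn : n.Prime) [Fact n.Prime]
    (V1 V2 : Type) [AddCommGroup V1] [AddCommGroup V2]
    [Module (ZMod n) V1] [Module (ZMod n) V2]
    (hd1 : Module.finrank (ZMod n) V1 = 2) (hd2 : Module.finrank (ZMod n) V2 = 2)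
    (e1 : V1 →ₗ[ZMod n] V1 →ₗ[ZMod n] ZMod n)
    (e2 : V2 →ₗ[ZMod n] V2 →ₗ[ZMod n] ZMod n)
    (halt1 : ∀ v, e1 v v = 0) (halt2 : ∀ v, e2 v v = 0)
    (hnd1 : ∀ v, (∀ w, e1 v w = 0) → v = 0)
    (hnd2 : ∀ v, (∀ w, e2 v w = 0) → v = 0) :
    Nat.card {G : Submodule (ZMod n) (V1 × V2) //
        Module.finrank (ZMod n) G = 2 ∧
        (∀ u ∈ G, ∀ v ∈ G, e1 u.1 v.1 + e2 u.2 v.2 = 0) ∧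
        ∃ (C1 : Submodule (ZMod n) V1) (C2 : Submodule (ZMod n) V2),
          G = C1.prod C2}
      = (n + 1) ^ 2 ∧
    Nat.card {G : Submodule (ZMod n) (V1 × V2) //
        Module.finrank (ZMod n) G = 2 ∧
        (∀ u ∈ G, ∀ v ∈ G, e1 u.1 v.1 + e2 u.2 v.2 = 0) ∧
        ∃ ψ : V1 ≃ₗ[ZMod n] V2,
          (∀ u v, e2 (ψ u) (ψ v) = - e1 u v) ∧
          G = LinearMap.graph (ψ : V1 →ₗ[ZMod n] V2)}
      = n ^ 3 - n ∧
    Nat.card {G : Submodule (ZMod n) (V1 × V2) //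
        Module.finrank (ZMod n) G = 2 ∧
        (∀ u ∈ G, ∀ v ∈ G, e1 u.1 v.1 + e2 u.2 v.2 = 0)}
      = (n ^ 4 - 1) / (n - 1) ∧
    (n + 1) ^ 2 + (n ^ 3 - n) = (n ^ 4 - 1) / (n - 1) := by
  haveI : NeZero n := ⟨hn.ne_zero⟩
  have hq : Fintype.card (ZMod n) = n := ZMod.card n
  have fd1 : FiniteDimensional (ZMod n) V1 := my_fd hd1
  have fd2 : FiniteDimensional (ZMod n) V2 := my_fd hd2
  have h2n : 2 ≤ n := hn.two_le
  have hcube : (n ^ 2 - 1) * n = n ^ 3 - n := by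
    rw [Nat.sub_mul, one_mul, ← pow_succ]
  have key : (n ^ 4 - 1) / (n - 1) = n ^ 3 + n ^ 2 + n + 1 := by
    have h1 : n ^ 4 - 1 = (n - 1) * (n ^ 3 + n ^ 2 + n + 1) := by
      have hn1 : 1 ≤ n := by omega
      have hn4 : 1 ≤ n ^ 4 := Nat.one_le_pow _ _ (by omega)
      zify [hn1, hn4]
      ring
    rw [h1, Nat.mul_div_cancel_left _ (by omega : 0 < n - 1)]
  have key2 : (n + 1) ^ 2 + (n ^ 3 - n) = n ^ 3 + n ^ 2 + n + 1 := by
    have h3 : n ≤ n ^ 3 := Nat.le_self_pow (by omega) n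
    zify [h3]
    ring
  refine ⟨?_, ?_, ?_, by omega⟩
  · rw [my_card_prodLag e1 e2 hd1 hd2 halt1 halt2 hnd1 hnd2, hq]
  · rw [my_card_graphLag e1 e2 hd1 hd2 halt1 halt2 hnd1 hnd2, hq, hcube]
  · rw [my_card_Lag e1 e2 hd1 hd2 halt1 halt2 hnd1 hnd2, hq, hcube]
    omega
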